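/- Define f : M(2×2, ℂ) → M(3×3, ℂ) by sending Z with entries z₁ = Z₁₁, z₂ = Z₁₂, z₃ = Z₂₁, z₄ = Z₂₂ to the matrix with rows (z₁², √2 z₁z₂, z₂²), (√2 z₁z₃, z₁z₄ + z₂z₃, √2 z₂z₄), (z₃², √2 z₃z₄, z₄²). Then f maps Ω_{2,2} into Ω_{3,3}, and the restriction f : Ω_{2,2} → Ω_{3,3} is a proper map, i.e., the preimage under f of every compact subset of Ω_{3,3} is compact. -/

import Mathlib

set_option maxHeartbeats 1000000

open Matrix
open scoped ComplexOrder

/-- The type I bounded symmetric domain `Ω_{r,s}`. -/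
def OmegaI (r s : ℕ) : Set (Matrix (Fin r) (Fin s) ℂ) :=
  {Z | (1 - Z * Zᴴ).PosDef}

/-- The map `f` of Statement 13. -/
noncomputable def squareMap (Z : Matrix (Fin 2) (Fin 2) ℂ) : Matrix (Fin 3) (Fin 3) ℂ :=
  !![Z 0 0 ^ 2,                          (Real.sqrt 2 : ℂ) * (Z 0 0 * Z 0 1),   Z 0 1 ^ 2;
     (Real.sqrt 2 : ℂ) * (Z 0 0 * Z 1 0), Z 0 0 * Z 1 1 + Z 0 1 * Z 1 0,
       (Real.sqrt 2 : ℂ) * (Z 0 1 * Z 1 1);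
     Z 1 0 ^ 2,                          (Real.sqrt 2 : ℂ) * (Z 1 0 * Z 1 1),   Z 1 1 ^ 2]

open scoped Kronecker

noncomputable def sc : ℂ := (Real.sqrt 2 : ℂ)

lemma hs2 : sc ^ 2 = 2 := by
  simp only [sc, ← Complex.ofReal_pow, Real.sq_sqrt (by norm_num : (0:ℝ) ≤ 2)]
  norm_num

lemma hs3 : sc ^ 3 = 2 * sc := by rw [pow_succ, hs2, mul_comm]

lemma hs4 : sc ^ 4 = 4 := by rw [show (4:ℕ) = 2*2 from rfl, pow_mul, hs2]; norm_num

lemma star_sc : (starRingEnd ℂ) sc = sc := Complex.conj_ofReal _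

noncomputable def iota : Matrix (Fin 2 × Fin 2) (Fin 3) ℂ :=
  fun p => ![![![(1:ℂ),0,0], ![0,sc/2,0]], ![![0,sc/2,0], ![0,0,(1:ℂ)]]] p.1 p.2

lemma iota_mul : iotaᴴ * iota = 1 := by
  ext i j
  fin_cases i <;> fin_cases j <;>
    simp [iota, Matrix.mul_apply, Fintype.sum_prod_type, Fin.sum_univ_two, Matrix.one_apply,
      star_sc, map_ofNat] <;>
    field_simp <;> linear_combination 2 * hs2

lemma key (Z : Matrix (Fin 2) (Fin 2) ℂ) :
    (1 : Matrix (Fin 3) (Fin 3) ℂ) - squareMap Z * (squareMap Z)ᴴ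
      = iotaᴴ * ((1 - (Z * Zᴴ) ⊗ₖ (Z * Zᴴ)) * iota) := by
  have hsc : (Real.sqrt 2 : ℂ) = sc := rfl
  ext i j
  fin_cases i <;> fin_cases j <;>
  · simp [iota, squareMap, hsc, Matrix.mul_apply, Matrix.one_apply,
      Fintype.sum_prod_type, Fin.sum_univ_two, Fin.sum_univ_three,
      _root_.map_mul, map_add, map_pow, star_sc, map_div₀, map_ofNat,
      Matrix.vecMul, dotProduct, Matrix.conjTranspose_apply,
      Complex.star_def]
    ring_nf
    try simp only [hs2, hs3, hs4]
    try ring_nf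
    try ring

lemma kron_conjTranspose (A B : Matrix (Fin 2) (Fin 2) ℂ) : (A ⊗ₖ B)ᴴ = Aᴴ ⊗ₖ Bᴴ := by
  ext ⟨i,j⟩ ⟨k,l⟩
  simp [conjTranspose_apply, kroneckerMap_apply, star_mul']

lemma kron_psd {A B : Matrix (Fin 2) (Fin 2) ℂ} (hA : A.PosSemidef) (hB : B.PosSemidef) :
    (A ⊗ₖ B).PosSemidef := by
  exact hA.kronecker hB

lemma kron_one_posdef {A : Matrix (Fin 2) (Fin 2) ℂ} (hA : A.PosDef) :
    (A ⊗ₖ (1 : Matrix (Fin 2) (Fin 2) ℂ)).PosDef := by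
  refine posDef_iff_dotProduct_mulVec.mpr ⟨?_, ?_⟩
  · show _ᴴ = _
    rw [kron_conjTranspose, hA.1.eq, conjTranspose_one]
  · intro x hx
    have key : star x ⬝ᵥ ((A ⊗ₖ (1 : Matrix (Fin 2) (Fin 2) ℂ)) *ᵥ x)
        = ∑ j : Fin 2, star (fun k => x (k, j)) ⬝ᵥ (A *ᵥ fun k => x (k, j)) := by
      simp [dotProduct, Matrix.mulVec, Fintype.sum_prod_type, Fin.sum_univ_two,
        kroneckerMap_apply, Matrix.one_apply]
      ring
    rw [key]
    have hex : ∃ j, (fun k => x (k,j)) ≠ 0 := by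
      by_contra h
      push_neg at h
      apply hx
      funext p
      simpa using congrFun (h p.2) p.1
    obtain ⟨j0, hj0⟩ := hex
    exact Finset.sum_pos' (fun j _ => hA.posSemidef.dotProduct_mulVec_nonneg _) ⟨j0, Finset.mem_univ _, hA.dotProduct_mulVec_pos hj0⟩

lemma split (W : Matrix (Fin 2) (Fin 2) ℂ) :
    (1 : Matrix (Fin 2 × Fin 2) (Fin 2 × Fin 2) ℂ) - W ⊗ₖ W
      = ((1 - W) ⊗ₖ 1) + (W ⊗ₖ (1 - W)) := by
  ext ⟨i,j⟩ ⟨k,l⟩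
  simp [kroneckerMap_apply, Matrix.one_apply, Prod.ext_iff, ite_and]
  split_ifs <;> ring

lemma posdef_conj {n m : Type*} [Fintype n] [Fintype m] {M : Matrix n n ℂ} (hM : M.PosDef)
    (B : Matrix n m ℂ) (hB : ∀ x : m → ℂ, x ≠ 0 → B *ᵥ x ≠ 0) : (Bᴴ * (M * B)).PosDef := by
  refine posDef_iff_dotProduct_mulVec.mpr ⟨?_, ?_⟩
  · rw [← Matrix.mul_assoc]
    exact isHermitian_conjTranspose_mul_mul B hM.1
  · intro x hx
    have : star x ⬝ᵥ ((Bᴴ * (M * B)) *ᵥ x) = star (B *ᵥ x) ⬝ᵥ (M *ᵥ (B *ᵥ x)) := by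
      rw [← Matrix.mul_assoc]
      simp only [star_mulVec, ← mulVec_mulVec, dotProduct_mulVec, vecMul_vecMul]
    rw [this]
    exact hM.dotProduct_mulVec_pos (hB x hx)

lemma iota_inj : ∀ x : Fin 3 → ℂ, x ≠ 0 → iota *ᵥ x ≠ 0 := by
  intro x hx h0
  apply hx
  have h1 : iotaᴴ *ᵥ (iota *ᵥ x) = 0 := by rw [h0, Matrix.mulVec_zero]
  rwa [Matrix.mulVec_mulVec, iota_mul, Matrix.one_mulVec] at h1

lemma mem_main (Z : Matrix (Fin 2) (Fin 2) ℂ) (h : (1 - Z * Zᴴ).PosDef) :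
    (1 - squareMap Z * (squareMap Z)ᴴ).PosDef := by
  have hW : (Z * Zᴴ).PosSemidef := posSemidef_self_mul_conjTranspose Z
  have hM : ((1 : Matrix (Fin 2 × Fin 2) (Fin 2 × Fin 2) ℂ) - (Z*Zᴴ) ⊗ₖ (Z*Zᴴ)).PosDef := by
    rw [split]
    exact (kron_one_posdef h).add_posSemidef (kron_psd hW h.posSemidef)
  rw [key]
  exact posdef_conj hM iota iota_inj

lemma psd_to_posdef (Z : Matrix (Fin 2) (Fin 2) ℂ) (hp : (1 - Z * Zᴴ).PosSemidef)
    (hf : (1 - squareMap Z * (squareMap Z)ᴴ).PosDef) : (1 - Z * Zᴴ).PosDef := by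
  refine posDef_iff_dotProduct_mulVec.mpr ⟨hp.1, fun x hx => ?_⟩
  rcases (hp.dotProduct_mulVec_nonneg x).lt_or_eq with hlt | heq
  · exact hlt
  exfalso
  have h0 : (1 - Z * Zᴴ) *ᵥ x = 0 := by
    rw [← (hp.dotProduct_mulVec_zero_iff x)]
    exact heq.symm
  have hWx : (Z * Zᴴ) *ᵥ x = x := by
    rw [Matrix.sub_mulVec, Matrix.one_mulVec, sub_eq_zero] at h0
    exact h0.symm
  set y : Fin 3 → ℂ := ![x 0 ^ 2, sc * (x 0 * x 1), x 1 ^ 2] with hy_def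
  have hy : y ≠ 0 := by
    intro h0y
    apply hx
    have hx0 : x 0 = 0 := by
      have := congrFun h0y 0
      simpa [hy_def, pow_eq_zero_iff] using this
    have hx1 : x 1 = 0 := by
      have := congrFun h0y 2
      simpa [hy_def, pow_eq_zero_iff] using this
    funext i
    fin_cases i <;> simpa
  have h00 := congrFun hWx 0
  have h01 := congrFun hWx 1
  simp only [Matrix.mulVec, dotProduct, Fin.sum_univ_two] at h00 h01
  have hv : iota *ᵥ y = fun p => x p.1 * x p.2 := by
    funext p
    fin_cases p <;>
    · simp [iota, Matrix.mulVec, dotProduct, Fin.sum_univ_three, hy_def]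
      try field_simp
      first | done | linear_combination x 0 * x 1 * hs2 | ring
  have hfix : ((Z * Zᴴ) ⊗ₖ (Z * Zᴴ)) *ᵥ (fun p => x p.1 * x p.2) = fun p => x p.1 * x p.2 := by
    funext p
    obtain ⟨i, j⟩ := p
    fin_cases i <;> fin_cases j <;>
    · simp only [Matrix.mulVec, dotProduct, Fintype.sum_prod_type, Fin.sum_univ_two,
        kroneckerMap_apply, Fin.mk_zero, Fin.mk_one, Fin.isValue]
      first
      | linear_combination ((Z * Zᴴ) 0 0 * x 0 + (Z * Zᴴ) 0 1 * x 1 + x 0) * h00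
      | linear_combination ((Z * Zᴴ) 1 0 * x 0 + (Z * Zᴴ) 1 1 * x 1) * h00 + x 0 * h01
      | linear_combination ((Z * Zᴴ) 1 0 * x 0 + (Z * Zᴴ) 1 1 * x 1 + x 1) * h01
  have hzero : (1 - squareMap Z * (squareMap Z)ᴴ) *ᵥ y = 0 := by
    rw [key, ← Matrix.mulVec_mulVec, ← Matrix.mulVec_mulVec, hv, Matrix.sub_mulVec,
      Matrix.one_mulVec, hfix, sub_self, Matrix.mulVec_zero]
  have hcontra := hf.dotProduct_mulVec_pos hy
  rw [hzero, dotProduct_zero] at hcontra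
  exact lt_irrefl 0 hcontra

lemma closed_nonneg : IsClosed {c : ℂ | 0 ≤ c} := by
  have : {c : ℂ | 0 ≤ c} = Complex.re ⁻¹' (Set.Ici 0) ∩ Complex.im ⁻¹' {0} := by
    ext c
    simp [Complex.le_def, eq_comm]
  rw [this]
  exact (isClosed_Ici.preimage Complex.continuous_re).inter
    (isClosed_singleton.preimage Complex.continuous_im)

lemma cont_entry (i j : Fin 2) : Continuous fun Z : Matrix (Fin 2) (Fin 2) ℂ => Z i j :=
  (continuous_apply j).comp (continuous_apply i)

lemma closed_psd : IsClosed {Z : Matrix (Fin 2) (Fin 2) ℂ | (1 - Z * Zᴴ).PosSemidef} := by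
  have hset : {Z : Matrix (Fin 2) (Fin 2) ℂ | (1 - Z * Zᴴ).PosSemidef}
      = ⋂ x : Fin 2 → ℂ, {Z | 0 ≤ star x ⬝ᵥ ((1 - Z * Zᴴ) *ᵥ x)} := by
    ext Z
    simp only [Set.mem_setOf_eq, Set.mem_iInter]
    constructor
    · exact fun h x => h.dotProduct_mulVec_nonneg x
    · intro h
      exact posSemidef_iff_dotProduct_mulVec.mpr ⟨(isHermitian_one.sub (isHermitian_mul_conjTranspose_self Z)), h⟩
  rw [hset]
  refine isClosed_iInter fun x => ?_
  have hcont : Continuous fun Z : Matrix (Fin 2) (Fin 2) ℂ => star x ⬝ᵥ ((1 - Z * Zᴴ) *ᵥ x) := by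
    simp only [dotProduct, Matrix.mulVec, Matrix.sub_apply, Matrix.one_apply,
      Matrix.mul_apply, Matrix.conjTranspose_apply, Pi.star_apply]
    refine continuous_finset_sum _ fun i _ => Continuous.mul continuous_const ?_
    refine continuous_finset_sum _ fun j _ => Continuous.mul ?_ continuous_const
    refine Continuous.sub continuous_const ?_
    exact continuous_finset_sum _ fun k _ =>
      ((cont_entry i k).mul ((Complex.continuous_conj).comp (cont_entry j k)))
  exact (closed_nonneg.preimage hcont)

lemma cont_sq : Continuous squareMap := by
  refine continuous_pi fun i => continuous_pi fun j => ?_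
  fin_cases i <;> fin_cases j <;> simp [squareMap] <;> fun_prop

lemma compact_ball :
    IsCompact {Z : Matrix (Fin 2) (Fin 2) ℂ | ∀ i j, Z i j ∈ Metric.closedBall (0:ℂ) 1} := by
  have : {Z : Matrix (Fin 2) (Fin 2) ℂ | ∀ i j, Z i j ∈ Metric.closedBall (0:ℂ) 1}
      = Set.pi Set.univ (fun _ : Fin 2 => Set.pi Set.univ
          (fun _ : Fin 2 => Metric.closedBall (0:ℂ) 1)) := by
    ext Z
    constructor
    · intro h
      intro i _
      intro j _
      simpa using h i j
    · intro h i j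
      simpa using h i (Set.mem_univ i) j (Set.mem_univ j)
  rw [this]
  exact isCompact_univ_pi fun i => isCompact_univ_pi fun j => isCompact_closedBall 0 1

lemma bound_psd (Z : Matrix (Fin 2) (Fin 2) ℂ) (h : (1 - Z * Zᴴ).PosSemidef) :
    ∀ i j, Z i j ∈ Metric.closedBall (0:ℂ) 1 := by
  intro i j
  have hform := h.dotProduct_mulVec_nonneg (Pi.single i 1)
  simp only [dotProduct, Matrix.mulVec, Matrix.sub_apply, Matrix.one_apply,
    Matrix.mul_apply, Matrix.conjTranspose_apply, Pi.star_apply, Pi.single_apply,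
    Fin.sum_univ_two] at hform
  simp only [Metric.mem_closedBall, dist_zero_right]
  fin_cases i <;> fin_cases j <;>
  · simp only [Fin.mk_zero, Fin.mk_one, Fin.isValue] at hform ⊢
    simp at hform
    rw [Complex.le_def] at hform
    have h1 := hform.1
    simp [Complex.mul_conj] at h1
    rw [Complex.norm_def, show (1:ℝ) = Real.sqrt 1 from Real.sqrt_one.symm]
    apply Real.sqrt_le_sqrt
    linarith [Complex.normSq_nonneg (Z 0 0), Complex.normSq_nonneg (Z 0 1),
      Complex.normSq_nonneg (Z 1 0), Complex.normSq_nonneg (Z 1 1)]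

/-- The map sending `Z = (z₁ z₂; z₃ z₄)` to the matrix with rows
`(z₁², √2 z₁z₂, z₂²)`, `(√2 z₁z₃, z₁z₄ + z₂z₃, √2 z₂z₄)`, `(z₃², √2 z₃z₄, z₄²)` maps
`Ω_{2,2}` into `Ω_{3,3}` and is proper: preimages of compact subsets of `Ω_{3,3}` are
compact. -/
theorem statement13 :
    (∀ Z ∈ OmegaI 2 2, squareMap Z ∈ OmegaI 3 3) ∧
    ∀ K : Set (Matrix (Fin 3) (Fin 3) ℂ), K ⊆ OmegaI 3 3 → IsCompact K →
      IsCompact {Z | Z ∈ OmegaI 2 2 ∧ squareMap Z ∈ K} := by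
  constructor
  · intro Z hZ
    exact mem_main Z hZ
  · intro K hK hKc
    have hSeq : {Z | Z ∈ OmegaI 2 2 ∧ squareMap Z ∈ K}
        = {Z : Matrix (Fin 2) (Fin 2) ℂ | (1 - Z * Zᴴ).PosSemidef} ∩ squareMap ⁻¹' K := by
      ext Z
      constructor
      · rintro ⟨h1, h2⟩
        exact ⟨(Matrix.PosDef.posSemidef h1), h2⟩
      · rintro ⟨h1, h2⟩
        exact ⟨psd_to_posdef Z h1 (hK h2), h2⟩
    rw [hSeq]
    refine compact_ball.of_isClosed_subset
      (closed_psd.inter (hKc.isClosed.preimage cont_sq)) ?_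
    intro Z hZ
    exact bound_psd Z hZ.1
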